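/- Let n ≥ 1, λ > 0, and 1 ≤ p ≤ ∞. The Lipschitz constant of σ_λ with respect to the ℓ_p norm, defined as sup over x ≠ y of ‖σ_λ(x) − σ_λ(y)‖_p / ‖x − y‖_p, equals λ · sup_{s ∈ Δₙ°} ‖Diag(s) − s sᵀ‖_p, the supremum being taken over the open probability simplex Δₙ°. -/

import Mathlib

open scoped ENNReal BigOperators

/-- The softmax function with inverse temperature `lam`. -/
noncomputable def softmax {n : ℕ} (lam : ℝ) (x : Fin n → ℝ) : Fin n → ℝ :=
  fun i => Real.exp (lam * x i) / ∑ j, Real.exp (lam * x j)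

/-- The ℓ_p norm on `Fin n → ℝ`, for `p ∈ [1, ∞]`. -/
noncomputable def lpNorm {n : ℕ} (p : ℝ≥0∞) (x : Fin n → ℝ) : ℝ :=
  if p = ⊤ then ⨆ i, |x i| else (∑ i, |x i| ^ p.toReal) ^ (1 / p.toReal)

/-- The ℓ_p-induced operator norm of a matrix. -/
noncomputable def opNorm {n m : ℕ} (p : ℝ≥0∞) (A : Matrix (Fin n) (Fin m) ℝ) : ℝ :=
  ⨆ v : {v : Fin m → ℝ // v ≠ 0}, lpNorm p (A.mulVec v.val) / lpNorm p v.val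

/-- The matrix `Diag(s) - s sᵀ` (Jacobian of softmax with `lam = 1` at a point with value `s`). -/
noncomputable def softmaxJac {n : ℕ} (s : Fin n → ℝ) : Matrix (Fin n) (Fin n) ℝ :=
  Matrix.diagonal s - Matrix.vecMulVec s s

/-- The open (interior of the) probability simplex. -/
def openSimplex (n : ℕ) : Set (Fin n → ℝ) :=
  {u | (∀ i, 0 < u i) ∧ ∑ i, u i = 1}

/-- The (closed) probability simplex. -/
def probSimplex (n : ℕ) : Set (Fin n → ℝ) :=
  {u | (∀ i, 0 ≤ u i) ∧ ∑ i, u i = 1}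
-- bridge lemma
lemma lpNorm_eq {n : ℕ} (p : ℝ≥0∞) [Fact (1 ≤ p)] (x : Fin n → ℝ) :
    lpNorm p x = ‖(WithLp.equiv p (Fin n → ℝ)).symm x‖ := by
  unfold lpNorm
  split_ifs with h
  · subst h
    rw [PiLp.norm_eq_ciSup]
    simp [Real.norm_eq_abs]
  · rw [PiLp.norm_eq_sum (ENNReal.toReal_pos (lt_of_lt_of_le one_pos (by exact_mod_cast Fact.out)).ne' h)]
    simp [Real.norm_eq_abs]

noncomputable def matCLM {n : ℕ} (p : ℝ≥0∞) [Fact (1 ≤ p)] (A : Matrix (Fin n) (Fin n) ℝ) :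
    PiLp p (fun _ : Fin n => ℝ) →L[ℝ] PiLp p (fun _ : Fin n => ℝ) :=
  LinearMap.toContinuousLinearMap
    (((WithLp.linearEquiv p ℝ (Fin n → ℝ)).symm.toLinearMap.comp
       (Matrix.toLin' A)).comp (WithLp.linearEquiv p ℝ (Fin n → ℝ)).toLinearMap)

lemma matCLM_apply {n : ℕ} (p : ℝ≥0∞) [Fact (1 ≤ p)] (A : Matrix (Fin n) (Fin n) ℝ)
    (v : Fin n → ℝ) :
    matCLM p A ((WithLp.equiv p (Fin n → ℝ)).symm v) =
      (WithLp.equiv p (Fin n → ℝ)).symm (A.mulVec v) := by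
  simp [matCLM, Matrix.toLin'_apply]

lemma equiv_symm_ne_zero {n : ℕ} (p : ℝ≥0∞) (v : Fin n → ℝ) (hv : v ≠ 0) :
    (WithLp.equiv p (Fin n → ℝ)).symm v ≠ 0 := by simpa using hv

lemma opNorm_eq {n : ℕ} (hn : 1 ≤ n) (p : ℝ≥0∞) [Fact (1 ≤ p)] (A : Matrix (Fin n) (Fin n) ℝ) :
    opNorm p A = ‖matCLM p A‖ := by
  have hne : Nonempty {v : Fin n → ℝ // v ≠ 0} := by
    refine ⟨Pi.single ⟨0, hn⟩ 1, ?_⟩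
    intro h
    have := congrFun h ⟨0, hn⟩
    simp at this
  have key : ∀ v : Fin n → ℝ, lpNorm p (A.mulVec v) / lpNorm p v =
      ‖matCLM p A ((WithLp.equiv p (Fin n → ℝ)).symm v)‖ / ‖(WithLp.equiv p (Fin n → ℝ)).symm v‖ := by
    intro v
    rw [lpNorm_eq, lpNorm_eq, matCLM_apply]
  refine le_antisymm (ciSup_le fun v => ?_) ?_
  · show lpNorm p (A.mulVec v.val) / lpNorm p v.val ≤ _
    rw [key]
    exact div_le_of_le_mul₀ (norm_nonneg _) (norm_nonneg _)
      (ContinuousLinearMap.le_opNorm _ _)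
  · have hbdd : BddAbove (Set.range fun v : {v : Fin n → ℝ // v ≠ 0} =>
        lpNorm p (A.mulVec v.val) / lpNorm p v.val) := by
      refine ⟨‖matCLM p A‖, ?_⟩
      rintro x ⟨v, rfl⟩
      show lpNorm p (A.mulVec v.val) / lpNorm p v.val ≤ _
      rw [key]
      exact div_le_of_le_mul₀ (norm_nonneg _) (norm_nonneg _)
        (ContinuousLinearMap.le_opNorm _ _)
    refine ContinuousLinearMap.opNorm_le_bound _ ?_ ?_
    · exact Real.iSup_nonneg fun v => div_nonneg (by rw [lpNorm_eq]; exact norm_nonneg _)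
        (by rw [lpNorm_eq]; exact norm_nonneg _)
    · intro x
      rcases eq_or_ne x 0 with rfl | hx
      · simp
      · have hx' : ((WithLp.equiv p (Fin n → ℝ)) x) ≠ 0 := by simpa using hx
        have h1 : lpNorm p (A.mulVec ((WithLp.equiv p (Fin n → ℝ)) x)) /
            lpNorm p ((WithLp.equiv p (Fin n → ℝ)) x) ≤ opNorm p A :=
          le_ciSup hbdd (⟨_, hx'⟩ : {v : Fin n → ℝ // v ≠ 0})
        rw [key] at h1
        have hxz : (0:ℝ) < ‖x‖ := norm_pos_iff.mpr hx
        have h2 : (WithLp.equiv p (Fin n → ℝ)).symm ((WithLp.equiv p (Fin n → ℝ)) x) = x := by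
          simp
        rw [h2] at h1
        calc ‖matCLM p A x‖ = ‖matCLM p A x‖ / ‖x‖ * ‖x‖ := by field_simp
        _ ≤ opNorm p A * ‖x‖ := by
            exact mul_le_mul_of_nonneg_right h1 (norm_nonneg _)

lemma sum_exp_pos {n : ℕ} (hn : 1 ≤ n) (lam : ℝ) (x : Fin n → ℝ) :
    0 < ∑ j, Real.exp (lam * x j) := by
  have : Nonempty (Fin n) := ⟨⟨0, hn⟩⟩
  exact Finset.sum_pos (fun j _ => Real.exp_pos _) Finset.univ_nonempty

lemma softmax_mem {n : ℕ} (hn : 1 ≤ n) (lam : ℝ) (x : Fin n → ℝ) :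
    softmax lam x ∈ openSimplex n := by
  have hS := sum_exp_pos hn lam x
  refine ⟨fun i => div_pos (Real.exp_pos _) hS, ?_⟩
  simp only [softmax]
  rw [← Finset.sum_div, div_self hS.ne']

lemma softmax_surj {n : ℕ} (lam : ℝ) (hlam : 0 < lam) {s : Fin n → ℝ}
    (hs : s ∈ openSimplex n) : softmax lam (fun i => Real.log (s i) / lam) = s := by
  funext i
  have h1 : ∀ j, Real.exp (lam * (Real.log (s j) / lam)) = s j := fun j => by
    rw [mul_div_cancel₀ _ hlam.ne', Real.exp_log (hs.1 j)]
  simp only [softmax, h1, hs.2, div_one]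

set_option maxHeartbeats 1000000 in
lemma softmax_hasFDerivAt {n : ℕ} (hn : 1 ≤ n) (lam : ℝ) (x : Fin n → ℝ) :
    HasFDerivAt (softmax lam)
      (lam • LinearMap.toContinuousLinearMap (Matrix.toLin' (softmaxJac (softmax lam x)))) x := by
  set S : ℝ := ∑ j, Real.exp (lam * x j) with hSdef
  have hS0 : S ≠ 0 := (sum_exp_pos hn lam x).ne'
  have hproj : ∀ i, HasFDerivAt (fun y : Fin n → ℝ => Real.exp (lam * y i))
      (Real.exp (lam * x i) • (lam • ContinuousLinearMap.proj i)) x := fun i =>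
    ((hasFDerivAt_apply i x).const_mul lam).exp
  have hS : HasFDerivAt (fun y : Fin n → ℝ => ∑ j, Real.exp (lam * y j))
      (∑ j, Real.exp (lam * x j) • (lam • ContinuousLinearMap.proj j)) x :=
    HasFDerivAt.fun_sum fun j _ => hproj j
  have hinv : HasFDerivAt (fun y : Fin n → ℝ => (∑ j, Real.exp (lam * y j))⁻¹)
      ((-(S ^ 2)⁻¹) • ∑ j, Real.exp (lam * x j) • (lam • ContinuousLinearMap.proj j)) x :=
    (hasDerivAt_inv hS0).comp_hasFDerivAt x hS
  rw [hasFDerivAt_pi']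
  intro i
  have hi : HasFDerivAt (fun y : Fin n → ℝ => Real.exp (lam * y i) * (∑ j, Real.exp (lam * y j))⁻¹)
      (Real.exp (lam * x i) • ((-(S ^ 2)⁻¹) • ∑ j, Real.exp (lam * x j) • (lam • ContinuousLinearMap.proj j)) +
        S⁻¹ • (Real.exp (lam * x i) • (lam • ContinuousLinearMap.proj i))) x :=
    (hproj i).mul hinv
  have heq : (fun y : Fin n → ℝ => softmax lam y i) =
      fun y : Fin n → ℝ => Real.exp (lam * y i) * (∑ j, Real.exp (lam * y j))⁻¹ := by
    funext y; simp [softmax, div_eq_mul_inv]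
  rw [heq]
  refine hi.congr_fderiv (Eq.symm ?_)
  apply ContinuousLinearMap.ext
  intro v
  simp only [ContinuousLinearMap.coe_comp', Function.comp_apply, ContinuousLinearMap.proj_apply,
    ContinuousLinearMap.smul_apply, ContinuousLinearMap.add_apply, ContinuousLinearMap.coe_sum',
    Finset.sum_apply, smul_eq_mul]
  have hJ : (Matrix.toLin' (softmaxJac (softmax lam x))) v i =
      softmax lam x i * v i - softmax lam x i * ∑ j, softmax lam x j * v j := by
    have h2 : (Matrix.vecMulVec (softmax lam x) (softmax lam x)).mulVec v i =
        softmax lam x i * ∑ j, softmax lam x j * v j := by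
      simp [Matrix.mulVec, dotProduct, Matrix.vecMulVec_apply, Finset.mul_sum, mul_assoc]
    simp [softmaxJac, Matrix.toLin'_apply, Matrix.sub_mulVec, h2, Matrix.mulVec_diagonal]
  simp only [Pi.smul_apply, smul_eq_mul, LinearMap.coe_toContinuousLinearMap']
  rw [hJ]
  simp only [softmax, ← hSdef]
  have hR : ∑ j, Real.exp (lam * x j) * (lam * v j) = lam * ∑ j, Real.exp (lam * x j) * v j := by
    rw [Finset.mul_sum]; exact Finset.sum_congr rfl fun j _ => by ring
  have hL : ∑ j, Real.exp (lam * x j) / S * v j = (∑ j, Real.exp (lam * x j) * v j) / S := by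
    rw [Finset.sum_div]; exact Finset.sum_congr rfl fun j _ => by ring
  rw [hR, hL]
  field_simp
  ring

section PiLpStuff
variable {n : ℕ} (p : ℝ≥0∞) [Fact (1 ≤ p)]

/-- softmax as a map on the PiLp space -/
noncomputable def softmaxLp (lam : ℝ) (y : PiLp p (fun _ : Fin n => ℝ)) :
    PiLp p (fun _ : Fin n => ℝ) :=
  (WithLp.equiv p (Fin n → ℝ)).symm (softmax lam ((WithLp.equiv p (Fin n → ℝ)) y))

lemma softmaxLp_hasFDerivAt (hn : 1 ≤ n) (lam : ℝ) (x : PiLp p (fun _ : Fin n => ℝ)) :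
    HasFDerivAt (softmaxLp p lam)
      (lam • matCLM p (softmaxJac (softmax lam ((WithLp.equiv p (Fin n → ℝ)) x)))) x := by
  set e := PiLp.continuousLinearEquiv p ℝ (fun _ : Fin n => ℝ) with he
  have h := softmax_hasFDerivAt hn lam (e x)
  have h2 := (e.symm.hasFDerivAt (x := softmax lam (e x))).comp x (h.comp x (e.hasFDerivAt))
  have h3 : (lam • matCLM p (softmaxJac (softmax lam ((WithLp.equiv p (Fin n → ℝ)) x)))) =
      ((e.symm : (Fin n → ℝ) →L[ℝ] PiLp p (fun _ : Fin n => ℝ)).comp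
        ((lam • LinearMap.toContinuousLinearMap
            (Matrix.toLin' (softmaxJac (softmax lam (e x))))).comp
          (e : PiLp p (fun _ : Fin n => ℝ) →L[ℝ] (Fin n → ℝ)))) := by
    ext v
    rfl
  rw [h3]
  exact h2
end PiLpStuff

section Bounds
variable {n : ℕ} (p : ℝ≥0∞) [Fact (1 ≤ p)]

lemma abs_apply_le_norm (v : PiLp p (fun _ : Fin n => ℝ)) (j : Fin n) : |v j| ≤ ‖v‖ := by
  by_cases h : p = ⊤
  · subst h
    rw [PiLp.norm_eq_ciSup, ← Real.norm_eq_abs]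
    exact le_ciSup (f := fun i => ‖v i‖) (Set.Finite.bddAbove (Set.finite_range _)) j
  · have hpt : 0 < p.toReal :=
      ENNReal.toReal_pos (lt_of_lt_of_le one_pos (by exact_mod_cast Fact.out)).ne' h
    rw [PiLp.norm_eq_sum hpt]
    have h1 : |v j| = (|v j| ^ p.toReal) ^ (1 / p.toReal) := by
      rw [← Real.rpow_mul (abs_nonneg _), mul_one_div, div_self hpt.ne', Real.rpow_one]
    rw [h1]
    refine Real.rpow_le_rpow (Real.rpow_nonneg (abs_nonneg _) _) ?_
      (by positivity)
    refine Finset.single_le_sum (f := fun i => ‖v i‖ ^ p.toReal) (fun i _ => by positivity)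
      (Finset.mem_univ j)

lemma matCLM_norm_le (A : Matrix (Fin n) (Fin n) ℝ) :
    ‖matCLM p A‖ ≤ ∑ i, ∑ j, |A i j| := by
  refine ContinuousLinearMap.opNorm_le_bound _ (by positivity) fun v => ?_
  set w : Fin n → ℝ := (WithLp.equiv p (Fin n → ℝ)) v with hw
  have hv : v = (WithLp.equiv p (Fin n → ℝ)).symm w := rfl
  rw [hv, matCLM_apply]
  have hrep : ∀ u : Fin n → ℝ, (WithLp.equiv p (Fin n → ℝ)).symm u =
      ∑ i, u i • (WithLp.equiv p (Fin n → ℝ)).symm (Pi.single i (1:ℝ)) := by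
    intro u
    have h0 : u = ∑ i, u i • (Pi.single i (1:ℝ) : Fin n → ℝ) := by
      funext k
      simp [Pi.single_apply]
    calc (WithLp.equiv p (Fin n → ℝ)).symm u
        = (WithLp.linearEquiv p ℝ (Fin n → ℝ)).symm
            (∑ i, u i • (Pi.single i (1:ℝ) : Fin n → ℝ)) := by rw [← h0]; rfl
      _ = ∑ i, u i • (WithLp.linearEquiv p ℝ (Fin n → ℝ)).symm (Pi.single i (1:ℝ)) := by
          rw [map_sum]
          exact Finset.sum_congr rfl fun i _ => by rw [map_smul]
      _ = ∑ i, u i • (WithLp.equiv p (Fin n → ℝ)).symm (Pi.single i (1:ℝ)) := rfl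
  have hrep := hrep (A.mulVec w)
  rw [hrep]
  calc ‖∑ i, (A.mulVec w i) • (WithLp.equiv p (Fin n → ℝ)).symm (Pi.single i (1:ℝ))‖
      ≤ ∑ i, ‖(A.mulVec w i) • (WithLp.equiv p (Fin n → ℝ)).symm (Pi.single i (1:ℝ))‖ :=
        norm_sum_le _ _
    _ = ∑ i, |A.mulVec w i| := by
        simp [norm_smul, PiLp.norm_toLp_single, Real.norm_eq_abs]
    _ ≤ ∑ i, ∑ j, |A i j| * ‖v‖ := by
        refine Finset.sum_le_sum fun i _ => ?_
        calc |A.mulVec w i| = |∑ j, A i j * w j| := by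
              simp [Matrix.mulVec, dotProduct]
          _ ≤ ∑ j, |A i j * w j| := Finset.abs_sum_le_sum_abs _ _
          _ ≤ ∑ j, |A i j| * ‖v‖ := by
              refine Finset.sum_le_sum fun j _ => ?_
              rw [abs_mul]
              exact mul_le_mul_of_nonneg_left (abs_apply_le_norm p v j) (abs_nonneg _)
    _ = (∑ i, ∑ j, |A i j|) * ‖v‖ := by
        rw [Finset.sum_mul]
        exact Finset.sum_congr rfl fun i _ => (Finset.sum_mul _ _ _).symm

lemma jac_entry_le {s : Fin n → ℝ} (hs : s ∈ openSimplex n) (i j : Fin n) :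
    |softmaxJac s i j| ≤ 1 := by
  have h1 : ∀ k, 0 < s k := hs.1
  have h2 : ∀ k, s k ≤ 1 := by
    intro k
    rw [← hs.2]
    exact Finset.single_le_sum (fun l _ => (h1 l).le) (Finset.mem_univ k)
  rcases eq_or_ne i j with rfl | hij
  · have he : softmaxJac s i i = s i - s i * s i := by
      simp [softmaxJac, Matrix.vecMulVec_apply]
    rw [he, abs_le]
    constructor <;> nlinarith [h1 i, h2 i]
  · have he : softmaxJac s i j = -(s i * s j) := by
      simp [softmaxJac, Matrix.diagonal_apply_ne _ hij, Matrix.vecMulVec_apply]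
    rw [he, abs_le]
    constructor <;> nlinarith [h1 i, h2 i, h1 j, h2 j]

lemma opNorm_jac_le (hn : 1 ≤ n) {s : Fin n → ℝ} (hs : s ∈ openSimplex n) :
    opNorm p (softmaxJac s) ≤ (n : ℝ) * n := by
  rw [opNorm_eq hn p]
  refine le_trans (matCLM_norm_le p _) ?_
  calc (∑ i, ∑ j, |softmaxJac s i j|) ≤ ∑ _i : Fin n, ∑ _j : Fin n, (1:ℝ) := by
        refine Finset.sum_le_sum fun i _ => Finset.sum_le_sum fun j _ => jac_entry_le hs i j
    _ = (n : ℝ) * n := by simp [mul_comm]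
end Bounds

lemma lpNorm_nonneg {n : ℕ} (p : ℝ≥0∞) [Fact (1 ≤ p)] (x : Fin n → ℝ) : 0 ≤ lpNorm p x := by
  rw [lpNorm_eq]; exact norm_nonneg _


/-- the Lipschitz constant of softmax in the ℓ_p norm equals
`lam` times the supremum over the open simplex of `‖Diag(s) - s sᵀ‖_p`. -/
theorem softmax_lipschitz_constant_eq_sup {n : ℕ} (hn : 1 ≤ n) (lam : ℝ) (hlam : 0 < lam)
    (p : ℝ≥0∞) (hp : 1 ≤ p) :
    (⨆ xy : {xy : (Fin n → ℝ) × (Fin n → ℝ) // xy.1 ≠ xy.2},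
        lpNorm p (softmax lam xy.val.1 - softmax lam xy.val.2) /
          lpNorm p (xy.val.1 - xy.val.2)) =
      lam * ⨆ s : openSimplex n, opNorm p (softmaxJac (s : Fin n → ℝ)) := by
  haveI : Fact (1 ≤ p) := ⟨hp⟩
  have hnR : (0:ℝ) < n := by exact_mod_cast hn
  -- nonemptiness
  have huS : (fun _ : Fin n => (n:ℝ)⁻¹) ∈ openSimplex n := by
    constructor
    · intro i; positivity
    · simp [Finset.sum_const, Finset.card_univ, nsmul_eq_mul]
      field_simp
  haveI hneS : Nonempty (openSimplex n) := ⟨⟨_, huS⟩⟩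
  haveI hneP : Nonempty {xy : (Fin n → ℝ) × (Fin n → ℝ) // xy.1 ≠ xy.2} := by
    refine ⟨⟨((Pi.single ⟨0, hn⟩ 1 : Fin n → ℝ), 0), ?_⟩⟩
    intro h
    have := congrFun h ⟨0, hn⟩
    simp at this
  -- bddAbove of jacobian norms
  have hbddC : BddAbove (Set.range fun s : openSimplex n => opNorm p (softmaxJac (s : Fin n → ℝ))) := by
    refine ⟨(n:ℝ) * n, ?_⟩
    rintro x ⟨s, rfl⟩
    exact opNorm_jac_le p hn s.2
  set Csup := ⨆ s : openSimplex n, opNorm p (softmaxJac (s : Fin n → ℝ)) with hCsup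
  have hCnn : 0 ≤ Csup :=
    Real.iSup_nonneg fun s => Real.iSup_nonneg fun v =>
      div_nonneg (lpNorm_nonneg p _) (lpNorm_nonneg p _)
  -- Lipschitz bound via mean value inequality
  have hlip : ∀ a b : PiLp p (fun _ : Fin n => ℝ),
      ‖softmaxLp p lam a - softmaxLp p lam b‖ ≤ (lam * Csup) * ‖a - b‖ := by
    intro a b
    refine Convex.norm_image_sub_le_of_norm_hasFDerivWithin_le (𝕜 := ℝ) (s := Set.univ)
      (f := softmaxLp p lam)
      (f' := fun y => lam • matCLM p (softmaxJac (softmax lam ((WithLp.equiv p (Fin n → ℝ)) y))))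
      (fun y _ => (softmaxLp_hasFDerivAt p hn lam y).hasFDerivWithinAt)
      (fun y _ => ?_) convex_univ trivial trivial
    rw [norm_smul, Real.norm_eq_abs, abs_of_pos hlam, ← opNorm_eq hn p]
    exact mul_le_mul_of_nonneg_left
      (le_ciSup hbddC ⟨softmax lam _, softmax_mem hn lam _⟩) hlam.le
  -- bridging
  have hbridge : ∀ x y : Fin n → ℝ,
      lpNorm p (softmax lam x - softmax lam y) =
        ‖softmaxLp p lam ((WithLp.equiv p (Fin n → ℝ)).symm x) -
          softmaxLp p lam ((WithLp.equiv p (Fin n → ℝ)).symm y)‖ := by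
    intro x y
    rw [lpNorm_eq]
    rfl
  have hbridge2 : ∀ x y : Fin n → ℝ, lpNorm p (x - y) =
      ‖(WithLp.equiv p (Fin n → ℝ)).symm x - (WithLp.equiv p (Fin n → ℝ)).symm y‖ := by
    intro x y
    rw [lpNorm_eq]
    rfl
  have hratio : ∀ xy : {xy : (Fin n → ℝ) × (Fin n → ℝ) // xy.1 ≠ xy.2},
      lpNorm p (softmax lam xy.val.1 - softmax lam xy.val.2) /
        lpNorm p (xy.val.1 - xy.val.2) ≤ lam * Csup := by
    rintro ⟨⟨x, y⟩, hxy⟩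
    show lpNorm p (softmax lam x - softmax lam y) / lpNorm p (x - y) ≤ lam * Csup
    rw [hbridge, hbridge2]
    refine div_le_of_le_mul₀ (norm_nonneg _) (mul_nonneg hlam.le hCnn) (hlip _ _)
  have hbddP : BddAbove (Set.range fun xy : {xy : (Fin n → ℝ) × (Fin n → ℝ) // xy.1 ≠ xy.2} =>
      lpNorm p (softmax lam xy.val.1 - softmax lam xy.val.2) /
        lpNorm p (xy.val.1 - xy.val.2)) := by
    refine ⟨lam * Csup, ?_⟩
    rintro r ⟨xy, rfl⟩
    exact hratio xy
  set L := ⨆ xy : {xy : (Fin n → ℝ) × (Fin n → ℝ) // xy.1 ≠ xy.2},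
      lpNorm p (softmax lam xy.val.1 - softmax lam xy.val.2) /
        lpNorm p (xy.val.1 - xy.val.2) with hLdef
  have hLnn : 0 ≤ L :=
    Real.iSup_nonneg fun xy => div_nonneg (lpNorm_nonneg p _) (lpNorm_nonneg p _)
  refine le_antisymm (ciSup_le hratio) ?_
  -- reverse direction
  rw [Real.mul_iSup_of_nonneg hlam.le]
  refine ciSup_le ?_
  rintro ⟨s, hs⟩
  show lam * opNorm p (softmaxJac s) ≤ L
  set x₀ : PiLp p (fun _ : Fin n => ℝ) :=
    (WithLp.equiv p (Fin n → ℝ)).symm (fun i => Real.log (s i) / lam) with hx₀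
  have hsf : softmax lam ((WithLp.equiv p (Fin n → ℝ)) x₀) = s := softmax_surj lam hlam hs
  have hd := softmaxLp_hasFDerivAt p hn lam x₀
  rw [hsf] at hd
  have hlipL : ∀ᶠ y in nhds x₀, ‖softmaxLp p lam y - softmaxLp p lam x₀‖ ≤ L * ‖y - x₀‖ := by
    refine Filter.Eventually.of_forall fun y => ?_
    rcases eq_or_ne y x₀ with rfl | hyx
    · simp
    · have hpos : (0:ℝ) < ‖y - x₀‖ := by
        rw [norm_pos_iff]
        exact sub_ne_zero_of_ne hyx
      have hne' : ((WithLp.equiv p (Fin n → ℝ)) y, (WithLp.equiv p (Fin n → ℝ)) x₀).1 ≠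
          ((WithLp.equiv p (Fin n → ℝ)) y, (WithLp.equiv p (Fin n → ℝ)) x₀).2 := (WithLp.equiv p (Fin n → ℝ)).injective.ne hyx
      have hle : lpNorm p (softmax lam ((WithLp.equiv p (Fin n → ℝ)) y) -
            softmax lam ((WithLp.equiv p (Fin n → ℝ)) x₀)) /
          lpNorm p ((WithLp.equiv p (Fin n → ℝ)) y - (WithLp.equiv p (Fin n → ℝ)) x₀) ≤ L :=
        le_ciSup hbddP (⟨((WithLp.equiv p (Fin n → ℝ)) y, (WithLp.equiv p (Fin n → ℝ)) x₀), hne'⟩ :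
          {xy : (Fin n → ℝ) × (Fin n → ℝ) // xy.1 ≠ xy.2})
      have e1 : lpNorm p (softmax lam ((WithLp.equiv p (Fin n → ℝ)) y) -
            softmax lam ((WithLp.equiv p (Fin n → ℝ)) x₀)) =
          ‖softmaxLp p lam y - softmaxLp p lam x₀‖ := by
        rw [hbridge]
        simp
      have e2 : lpNorm p ((WithLp.equiv p (Fin n → ℝ)) y - (WithLp.equiv p (Fin n → ℝ)) x₀) =
          ‖y - x₀‖ := by
        rw [hbridge2]
        simp
      rw [e1, e2] at hle
      exact (div_le_iff₀ hpos).1 hle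
  have hfin := hd.le_of_lip' hLnn hlipL
  rw [norm_smul, Real.norm_eq_abs, abs_of_pos hlam, ← opNorm_eq hn p] at hfin
  exact hfin
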